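/- There is a unique upper triangular n×n matrix Ŝ with positive diagonal entries whose columns are unit vectors with pairwise inner products all equal to α ∈ (0,1); its entries satisfy ŝ₁₁ = 1, ŝ_{i,i+1} = ... = ŝ_{i,n} = ŝ_{ii} - (1-α)/ŝ_{ii}, and ŝ_{ii}² = 1 - (ŝ_{1i}² + ... + ŝ_{i-1,i}²). -/

import Mathlib

open Matrix

noncomputable def Gmat (n : ℕ) (α : ℝ) : Matrix (Fin n) (Fin n) ℝ :=
  (1 - α) • (1 : Matrix (Fin n) (Fin n) ℝ) + α • (Matrix.of fun _ _ => (1 : ℝ))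

namespace Stmt14Aux

lemma gmat_apply (n : ℕ) (α : ℝ) (i j : Fin n) :
    Gmat n α i j = if i = j then 1 else α := by
  simp only [Gmat, Matrix.add_apply, Matrix.smul_apply, Matrix.one_apply,
    Matrix.of_apply, smul_eq_mul]
  split <;> ring

noncomputable def dd (α : ℝ) (i : ℕ) : ℝ :=
  Real.sqrt ((1 - α) * ((i : ℝ) * α + 1) / ((i : ℝ) * α + 1 - α))

noncomputable def cc (α : ℝ) (i : ℕ) : ℝ :=
  α * (1 - α) / (((i : ℝ) * α + 1 - α) * dd α i)

variable {α : ℝ}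

lemma ipos (hα₁ : 0 < α) (i : ℕ) : (0:ℝ) ≤ (i : ℝ) * α :=
  mul_nonneg (Nat.cast_nonneg i) hα₁.le

lemma gpos (hα₁ : 0 < α) (hα₂ : α < 1) (i : ℕ) : 0 < (i : ℝ) * α + 1 - α := by
  have := ipos hα₁ i; linarith

lemma fpos (hα₁ : 0 < α) (i : ℕ) : 0 < (i : ℝ) * α + 1 := by
  have := ipos hα₁ i; linarith

lemma dpos (hα₁ : 0 < α) (hα₂ : α < 1) (i : ℕ) : 0 < dd α i := by
  apply Real.sqrt_pos.2
  exact div_pos (mul_pos (by linarith) (fpos hα₁ i)) (gpos hα₁ hα₂ i)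

lemma dsq (hα₁ : 0 < α) (hα₂ : α < 1) (i : ℕ) :
    dd α i ^ 2 = (1 - α) * ((i : ℝ) * α + 1) / ((i : ℝ) * α + 1 - α) :=
  Real.sq_sqrt (le_of_lt (div_pos (mul_pos (by linarith) (fpos hα₁ i)) (gpos hα₁ hα₂ i)))

lemma csq (hα₁ : 0 < α) (hα₂ : α < 1) (i : ℕ) :
    cc α i ^ 2 = α ^ 2 * (1 - α) / (((i : ℝ) * α + 1 - α) * ((i : ℝ) * α + 1)) := by
  have h1 : (1:ℝ) - α ≠ 0 := by linarith
  have hg := (gpos hα₁ hα₂ i).ne'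
  have hf := (fpos hα₁ i).ne'
  have hgd : (((i:ℝ) * α + 1 - α) * dd α i) ^ 2
      = ((i:ℝ) * α + 1 - α) * ((1 - α) * ((i:ℝ) * α + 1)) := by
    rw [mul_pow, dsq hα₁ hα₂]
    field_simp
  rw [cc, div_pow, hgd]
  field_simp

lemma dc (hα₁ : 0 < α) (hα₂ : α < 1) (i : ℕ) :
    dd α i * cc α i = α * (1 - α) / ((i : ℝ) * α + 1 - α) := by
  have hg := (gpos hα₁ hα₂ i).ne'
  have hd := (dpos hα₁ hα₂ i).ne'
  rw [cc]
  field_simp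

lemma sumc (hα₁ : 0 < α) (hα₂ : α < 1) (m : ℕ) :
    ∑ k ∈ Finset.range m, cc α k ^ 2 = α - α * (1 - α) / ((m : ℝ) * α + 1 - α) := by
  induction m with
  | zero =>
      have h : (1:ℝ) - α ≠ 0 := by linarith
      simp only [Finset.range_zero, Finset.sum_empty, Nat.cast_zero]
      rw [zero_mul, zero_add]
      field_simp
      ring
  | succ m ih =>
      have hg := (gpos hα₁ hα₂ m).ne'
      have hf := (fpos hα₁ m).ne'
      have hg' := (gpos hα₁ hα₂ (m+1)).ne'
      rw [Finset.sum_range_succ, ih, csq hα₁ hα₂]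
      push_cast at hg' ⊢
      have h3 : α * (m:ℝ) + 1 - α ≠ 0 := by rw [mul_comm]; exact hg
      have h4 : α * ((m:ℝ) + 1) + 1 - α ≠ 0 := by rw [mul_comm]; exact hg'
      field_simp
      ring

lemma sum_diag (hα₁ : 0 < α) (hα₂ : α < 1) (i : ℕ) :
    ∑ k ∈ Finset.range i, cc α k ^ 2 + dd α i ^ 2 = 1 := by
  have hg := (gpos hα₁ hα₂ i).ne'
  rw [sumc hα₁ hα₂, dsq hα₁ hα₂]
  have h3 : α * (i:ℝ) + 1 - α ≠ 0 := by rw [mul_comm]; exact hg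
  field_simp
  ring

lemma sum_off (hα₁ : 0 < α) (hα₂ : α < 1) (i : ℕ) :
    ∑ k ∈ Finset.range i, cc α k ^ 2 + dd α i * cc α i = α := by
  rw [sumc hα₁ hα₂, dc hα₁ hα₂]
  ring

noncomputable def Smat (n : ℕ) (α : ℝ) : Matrix (Fin n) (Fin n) ℝ :=
  Matrix.of fun i j =>
    if (i : ℕ) < (j : ℕ) then cc α i else if (i : ℕ) = (j : ℕ) then dd α i else 0

lemma smat_tri (n : ℕ) (α : ℝ) (i j : Fin n) (h : (j : ℕ) < (i : ℕ)) :
    Smat n α i j = 0 := by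
  simp only [Smat, Matrix.of_apply]
  rw [if_neg (by omega), if_neg (by omega)]

lemma smat_diag (n : ℕ) (α : ℝ) (i : Fin n) : Smat n α i i = dd α i := by
  simp [Smat]

-- The inner product of columns i and j of Smat, for i ≤ j.
lemma smat_col {n : ℕ} {α : ℝ} (i j : Fin n) (hij : (i : ℕ) ≤ (j : ℕ)) :
    ∑ k : Fin n, Smat n α k i * Smat n α k j =
      ∑ m ∈ Finset.range (i : ℕ), cc α m ^ 2 +
        dd α i * (if (i : ℕ) < (j : ℕ) then cc α i else dd α i) := by
  set F : ℕ → ℝ := fun m =>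
    (if m < (i : ℕ) then cc α m else if m = (i : ℕ) then dd α m else 0) *
    (if m < (j : ℕ) then cc α m else if m = (j : ℕ) then dd α m else 0) with hF
  have h1 : ∑ k : Fin n, Smat n α k i * Smat n α k j = ∑ m ∈ Finset.range n, F m :=
    Fin.sum_univ_eq_sum_range F n
  have h2 : ∑ m ∈ Finset.range n, F m = ∑ m ∈ Finset.range ((i : ℕ) + 1), F m := by
    refine (Finset.sum_subset (Finset.range_subset_range.2 i.isLt) ?_).symm
    intro x hx hnx
    simp only [Finset.mem_range] at hx hnx
    have hxi : (i : ℕ) < x := by omega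
    simp only [hF]
    rw [if_neg (by omega), if_neg (by omega), zero_mul]
  rw [h1, h2, Finset.sum_range_succ]
  congr 1
  · apply Finset.sum_congr rfl
    intro m hm
    simp only [Finset.mem_range] at hm
    simp only [hF]
    rw [if_pos hm, if_pos (by omega), sq]
  · simp only [hF, lt_irrefl, if_false, eq_self_iff_true, if_true, ite_true, ite_false]
    by_cases h : (i : ℕ) < (j : ℕ)
    · rw [if_pos h, if_pos h]
    · have hij' : (i : ℕ) = (j : ℕ) := by omega
      rw [if_neg h, if_neg h, if_pos hij']

lemma smat_gram {n : ℕ} (hα₁ : 0 < α) (hα₂ : α < 1) :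
    (Smat n α)ᵀ * Smat n α = Gmat n α := by
  ext i j
  rw [Matrix.mul_apply, gmat_apply]
  simp only [Matrix.transpose_apply]
  rcases lt_trichotomy (i : ℕ) (j : ℕ) with h | h | h
  · have hne : ¬ i = j := fun hij => by simp [hij] at h
    rw [smat_col i j h.le, if_pos h, if_neg hne, sum_off hα₁ hα₂]
  · have hij : i = j := Fin.ext h
    subst hij
    rw [smat_col i i le_rfl, if_neg (lt_irrefl _), if_pos rfl, ← sq, sum_diag hα₁ hα₂]
  · have hne : ¬ i = j := fun hij => by simp [hij] at h
    rw [Finset.sum_congr rfl fun k _ => mul_comm (Smat n α k i) (Smat n α k j),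
      smat_col j i h.le, if_pos h, if_neg hne, sum_off hα₁ hα₂]

-- Any matrix satisfying the hypotheses satisfies the recurrences.
lemma key {n : ℕ} {α : ℝ} (Shat : Matrix (Fin n) (Fin n) ℝ)
    (htri : ∀ i j : Fin n, (j : ℕ) < (i : ℕ) → Shat i j = 0)
    (hpos : ∀ i : Fin n, 0 < Shat i i)
    (hgram : Shatᵀ * Shat = Gmat n α) :
    (∀ i : Fin n, Shat i i ^ 2 = 1 - ∑ k ∈ Finset.Iio i, Shat k i ^ 2) ∧
    (∀ i j : Fin n, (i : ℕ) < (j : ℕ) → Shat i j = Shat i i - (1 - α) / Shat i i) := by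
  have hent : ∀ i j : Fin n, ∑ k ∈ Finset.Iic i, Shat k i * Shat k j
      = (if i = j then (1:ℝ) else α) := by
    intro i j
    have h := congrFun (congrFun hgram i) j
    rw [Matrix.mul_apply, gmat_apply] at h
    simp only [Matrix.transpose_apply] at h
    rw [← h]
    refine Finset.sum_subset (Finset.subset_univ _) ?_
    intro k _ hk
    simp only [Finset.mem_Iic, not_le] at hk
    rw [htri k i hk, zero_mul]
  have hdiag : ∀ i : Fin n, ∑ k ∈ Finset.Iio i, Shat k i ^ 2 + Shat i i ^ 2 = 1 := by
    intro i
    have h := hent i i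
    rw [if_pos rfl, ← Finset.Iio_insert i, Finset.sum_insert (by simp)] at h
    have hsq : ∀ k ∈ Finset.Iio i, Shat k i * Shat k i = Shat k i ^ 2 :=
      fun k _ => (pow_two _).symm
    rw [Finset.sum_congr rfl hsq] at h
    rw [pow_two]
    linarith
  refine ⟨fun i => by have := hdiag i; linarith, ?_⟩
  have main : ∀ m : ℕ, ∀ i j : Fin n, (i : ℕ) = m → (i : ℕ) < (j : ℕ) →
      Shat i j = Shat i i - (1 - α) / Shat i i := by
    intro m
    induction m using Nat.strong_induction_on with
    | _ m IH =>
      intro i j him hij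
      have hne : i ≠ j := fun h => by simp [h] at hij
      have h := hent i j
      rw [if_neg hne, ← Finset.Iio_insert i, Finset.sum_insert (by simp)] at h
      have hsame : ∀ k ∈ Finset.Iio i, Shat k i * Shat k j = Shat k i ^ 2 := by
        intro k hk
        simp only [Finset.mem_Iio] at hk
        have hki : (k : ℕ) < (i : ℕ) := hk
        have h1 := IH (k : ℕ) (by omega) k i rfl hki
        have h2 := IH (k : ℕ) (by omega) k j rfl (by omega)
        rw [h2, ← h1, ← pow_two]
      rw [Finset.sum_congr rfl hsame] at h
      have hd := hdiag i
      have hkey : Shat i i * Shat i j = Shat i i ^ 2 - (1 - α) := by linarith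
      have hne' : Shat i i ≠ 0 := (hpos i).ne'
      have hrw : Shat i j = (Shat i i * Shat i j) / Shat i i := by field_simp
      rw [hrw, hkey]
      field_simp
  exact fun i j h => main (i : ℕ) i j rfl h

lemma uniq {n : ℕ} {α : ℝ} (A B : Matrix (Fin n) (Fin n) ℝ)
    (htriA : ∀ i j : Fin n, (j : ℕ) < (i : ℕ) → A i j = 0)
    (hposA : ∀ i : Fin n, 0 < A i i) (hgramA : Aᵀ * A = Gmat n α)
    (htriB : ∀ i j : Fin n, (j : ℕ) < (i : ℕ) → B i j = 0)
    (hposB : ∀ i : Fin n, 0 < B i i) (hgramB : Bᵀ * B = Gmat n α) :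
    A = B := by
  obtain ⟨hdA, hoffA⟩ := key A htriA hposA hgramA
  obtain ⟨hdB, hoffB⟩ := key B htriB hposB hgramB
  have main : ∀ m : ℕ, ∀ i : Fin n, (i : ℕ) = m → ∀ j : Fin n, A i j = B i j := by
    intro m
    induction m using Nat.strong_induction_on with
    | _ m IH =>
      intro i him j
      have hdd : A i i = B i i := by
        have hsq : A i i ^ 2 = B i i ^ 2 := by
          rw [hdA i, hdB i]
          congr 1
          apply Finset.sum_congr rfl
          intro k hk
          simp only [Finset.mem_Iio] at hk
          have hki : (k : ℕ) < (i : ℕ) := hk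
          rw [IH (k : ℕ) (by omega) k rfl i]
        nlinarith [hposA i, hposB i]
      rcases lt_trichotomy (j : ℕ) (i : ℕ) with h | h | h
      · rw [htriA _ _ h, htriB _ _ h]
      · have : j = i := Fin.ext h
        subst this
        exact hdd
      · rw [hoffA i j h, hoffB i j h, hdd]
  ext i j
  exact main (i : ℕ) i rfl j

end Stmt14Aux

open Stmt14Aux in
theorem stmt14 (n : ℕ) (hn : 1 ≤ n) (α : ℝ) (hα₁ : 0 < α) (hα₂ : α < 1) :
    (∃! Shat : Matrix (Fin n) (Fin n) ℝ,
      (∀ i j : Fin n, (j : ℕ) < (i : ℕ) → Shat i j = 0) ∧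
      (∀ i : Fin n, 0 < Shat i i) ∧
      Shatᵀ * Shat = Gmat n α) ∧
    (∀ Shat : Matrix (Fin n) (Fin n) ℝ,
      (∀ i j : Fin n, (j : ℕ) < (i : ℕ) → Shat i j = 0) →
      (∀ i : Fin n, 0 < Shat i i) →
      Shatᵀ * Shat = Gmat n α →
        Shat ⟨0, hn⟩ ⟨0, hn⟩ = 1 ∧
        (∀ i j : Fin n, (i : ℕ) < (j : ℕ) →
          Shat i j = Shat i i - (1 - α) / Shat i i) ∧
        (∀ i : Fin n,
          (Shat i i) ^ 2 = 1 - ∑ k ∈ Finset.Iio i, (Shat k i) ^ 2)) := by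
  constructor
  · refine ⟨Smat n α, ⟨smat_tri n α, ?_, smat_gram hα₁ hα₂⟩, ?_⟩
    · intro i
      rw [smat_diag]
      exact dpos hα₁ hα₂ i
    · rintro y ⟨htri, hpos, hgram⟩
      exact uniq y (Smat n α) htri hpos hgram (smat_tri n α)
        (fun i => by rw [smat_diag]; exact dpos hα₁ hα₂ i) (smat_gram hα₁ hα₂)
  · intro Shat htri hpos hgram
    obtain ⟨hdiag, hoff⟩ := key Shat htri hpos hgram
    refine ⟨?_, hoff, hdiag⟩
    have h0 := hdiag ⟨0, hn⟩
    have hempty : (Finset.Iio (⟨0, hn⟩ : Fin n)) = ∅ := by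
      ext k
      simp [Fin.lt_def]
    rw [hempty, Finset.sum_empty] at h0
    have := hpos ⟨0, hn⟩
    nlinarith
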